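/- Let a and b be nonzero elements of K with a/b ∈ 𝓕(D). Then a/b is an irreducible element of D if and only if there is no nonzero x ∈ K such that both a/x ∈ 𝓕(D) and x/b ∈ 𝓕(D). -/

import Mathlib

/-- `x ∈ 𝓕(D)` : `x : K` is expressible as a finite product `π₁ ⋯ πₙ` (`n ≥ 1`) of
irreducible elements of `D`, viewed in `K` via the algebra map. -/
def MemFD (D : Type*) {K : Type*} [CommRing D] [Field K] [Algebra D K] (x : K) : Prop :=
  ∃ l : List D, l ≠ [] ∧ (∀ p ∈ l, Irreducible p) ∧ x = algebraMap D K l.prod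

lemma prod_not_unit {D : Type*} [CommMonoid D] {l : List D} (hne : l ≠ [])
    (h : ∀ p ∈ l, Irreducible p) : ¬ IsUnit l.prod := by
  cases l with
  | nil => exact absurd rfl hne
  | cons p t =>
    intro hu
    rw [List.prod_cons] at hu
    exact (h p (by simp)).not_isUnit (isUnit_of_mul_isUnit_left hu)

lemma prod_ne_zero {D : Type*} [CommMonoidWithZero D] [NoZeroDivisors D] [Nontrivial D] {l : List D}
    (h : ∀ p ∈ l, Irreducible p) : l.prod ≠ 0 :=
  List.prod_ne_zero (fun h0 => (h 0 h0).ne_zero rfl)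

/-- For nonzero `a b : K` with `a / b ∈ 𝓕(D)`, the quotient `a / b` is an irreducible
element of `D` if and only if there is no nonzero `x : K` with `a / x ∈ 𝓕(D)` and
`x / b ∈ 𝓕(D)`. -/
theorem edge_iff_irreducible
    (D K : Type*) [CommRing D] [IsDomain D] [Field K] [Algebra D K] [IsFractionRing D K]
    (a b : K) (ha : a ≠ 0) (hb : b ≠ 0) (hab : MemFD D (a / b)) :
    (∃ π : D, Irreducible π ∧ a / b = algebraMap D K π) ↔
      ¬ ∃ x : K, x ≠ 0 ∧ MemFD D (a / x) ∧ MemFD D (x / b) := by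
  have inj := IsFractionRing.injective D K
  constructor
  · rintro ⟨π, hπ, hπeq⟩ ⟨x, hx, ⟨l, hl, hlirr, hleq⟩, ⟨m, hm, hmirr, hmeq⟩⟩
    have key : algebraMap D K π = algebraMap D K (l.prod * m.prod) := by
      rw [map_mul, ← hleq, ← hmeq, ← hπeq]
      field_simp
    have hπeq' : π = l.prod * m.prod := inj key
    rcases hπ.isUnit_or_isUnit hπeq' with h | h
    · exact prod_not_unit hl hlirr h
    · exact prod_not_unit hm hmirr h
  · intro hno
    obtain ⟨l, hl, hlirr, hleq⟩ := hab
    cases l with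
    | nil => exact absurd rfl hl
    | cons p t =>
      cases t with
      | nil =>
        exact ⟨p, hlirr p (by simp), by simpa using hleq⟩
      | cons q s =>
        exfalso
        apply hno
        set c : K := algebraMap D K (q :: s).prod with hc
        have hcirr : ∀ r ∈ (q :: s), Irreducible r := fun r hr => hlirr r (by simp [hr])
        have hc0 : c ≠ 0 := by
          simp only [hc, map_ne_zero_iff _ inj]
          exact prod_ne_zero hcirr
        refine ⟨b * c, mul_ne_zero hb hc0, ⟨[p], by simp, by simpa using hlirr p (by simp), ?_⟩,
          ⟨q :: s, by simp, hcirr, by simp [hc, mul_div_assoc, mul_div_cancel_left₀ _ hb, mul_comm]⟩⟩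
        have : a / b = algebraMap D K p * c := by
          rw [hleq, List.prod_cons, map_mul]
        rw [div_eq_iff hb] at this
        rw [this]
        field_simp
        simp
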